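/- Let a ≠ b and let λ ∈ ℂ with λ ≠ 0 and λ² ≠ b². If g ∈ K with g ≠ 0 satisfies Tg = φ_{a,b}(λ)·g, then the vector ψ := b·(d*g) + λ·S(d*g) ∈ H is nonzero and satisfies Uψ = λψ; in particular λ is an eigenvalue of U. -/

import Mathlib

open ContinuousLinearMap

/-- If `a ≠ b`, `λ ≠ 0`, `λ² ≠ b²`, `g ≠ 0` and
`Tg = φ_{a,b}(λ)·g`, then `ψ := b·(d*g) + λ·S(d*g)` is nonzero and `Uψ = λψ`;
in particular `λ` is an eigenvalue of `U`. -/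
theorem stmt_12 {H K : Type*}
    [NormedAddCommGroup H] [InnerProductSpace ℂ H] [CompleteSpace H] [Nontrivial H]
    [NormedAddCommGroup K] [InnerProductSpace ℂ K] [CompleteSpace K] [Nontrivial K]
    (a b : ℝ) (hab : a ≠ b)
    (d : H →L[ℂ] K) (hd : d ∘L (adjoint d) = 1)
    (S : H →L[ℂ] H) (hS : IsSelfAdjoint S) (hS2 : S ∘L S = 1)
    (C : H →L[ℂ] H)
    (hC : C = (a : ℂ) • ((adjoint d) ∘L d) + (b : ℂ) • (1 - (adjoint d) ∘L d))
    (U : H →L[ℂ] H) (hU : U = S ∘L C)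
    (T : K →L[ℂ] K) (hT : T = d ∘L S ∘L (adjoint d))
    (lam : ℂ) (hlam0 : lam ≠ 0) (hlamb : lam ^ 2 ≠ (b : ℂ) ^ 2)
    (g : K) (hg0 : g ≠ 0)
    (hg : T g = ((lam - (a * b : ℝ) * lam⁻¹) / ((a : ℂ) - (b : ℝ))) • g) :
    (b : ℂ) • ((adjoint d) g) + lam • S ((adjoint d) g) ≠ 0 ∧
    U ((b : ℂ) • ((adjoint d) g) + lam • S ((adjoint d) g)) =
      lam • ((b : ℂ) • ((adjoint d) g) + lam • S ((adjoint d) g)) ∧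
    (∃ ψ : H, ψ ≠ 0 ∧ U ψ = lam • ψ) := by
  set f : H := (adjoint d) g with hf
  have hdf : d f = g := by
    have := congrArg (fun u : K →L[ℂ] K => u g) hd
    simpa using this
  have hSS : ∀ x : H, S (S x) = x := by
    intro x
    have := congrArg (fun u : H →L[ℂ] H => u x) hS2
    simpa using this
  have hab' : (a : ℂ) - (b : ℝ) ≠ 0 := by
    intro h
    apply hab
    have : (a : ℂ) = (b : ℝ) := by linear_combination h
    exact_mod_cast this
  obtain ⟨φ, hφ⟩ : ∃ c : ℂ, c = (lam - (a * b : ℝ) * lam⁻¹) / ((a : ℂ) - (b : ℝ)) := ⟨_, rfl⟩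
  rw [← hφ] at hg
  have key : lam * φ * ((a : ℂ) - (b : ℝ)) = lam ^ 2 - (a : ℂ) * (b : ℝ) := by
    rw [hφ]
    field_simp
    push_cast
    ring
  -- P (S f) = φ • f
  have hPSf : (adjoint d) (d (S f)) = φ • f := by
    have h1 : d (S f) = φ • g := by
      have := hg
      rw [hT] at this
      simpa [hf] using this
    rw [h1, map_smul, ← hf]
  have hPf : (adjoint d) (d f) = f := by rw [hdf, ← hf]
  have hCf : C f = (a : ℂ) • f := by
    rw [hC]
    simp [hPf]
  have hCSf : C (S f) = ((a : ℂ) * φ) • f + (b : ℂ) • S f - ((b : ℂ) * φ) • f := by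
    rw [hC]
    simp only [add_apply, smul_apply, comp_apply, sub_apply, one_apply_eq_self, hPSf, smul_sub,
      smul_smul]
    abel
  -- nonvanishing
  have hne : (b : ℂ) • f + lam • S f ≠ 0 := by
    intro h1
    have h2 : (b : ℂ) • S f + lam • f = 0 := by
      have := congrArg S h1
      simpa [map_add, map_smul, hSS] using this
    have e1 := congrArg (fun x : H => (b : ℂ) • x) h1
    have e2 := congrArg (fun x : H => lam • x) h2
    simp only [smul_add, smul_smul, smul_zero] at e1 e2
    have h3 : ((b : ℂ) ^ 2 - lam ^ 2) • f = 0 := by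
      have : (((b:ℂ)*(b:ℂ)) • f + ((b:ℂ)*lam) • S f) - ((lam*(b:ℂ)) • S f + (lam*lam) • f)
          = ((b : ℂ) ^ 2 - lam ^ 2) • f := by
        module
      rw [← this, e1, e2, sub_zero]
    have hf0 : f = 0 := by
      rcases smul_eq_zero.mp h3 with h | h
      · exact absurd (sub_eq_zero.mp h) (Ne.symm hlamb)
      · exact h
    apply hg0
    rw [← hdf, hf0, map_zero]
  refine ⟨hne, ?_, ?_⟩
  · rw [hU]
    simp only [comp_apply, map_add, map_smul, hCf, hCSf, map_sub, hSS, smul_add, smul_sub,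
      smul_smul]
    have hkey2 : lam * ((a : ℂ) * φ) - lam * ((b : ℂ) * φ) = lam ^ 2 - (a : ℂ) * (b : ℝ) := by
      linear_combination key
    match_scalars
    · linear_combination key
    · ring
  · refine ⟨(b : ℂ) • f + lam • S f, hne, ?_⟩
    rw [hU]
    simp only [comp_apply, map_add, map_smul, hCf, hCSf, map_sub, hSS, smul_add, smul_sub,
      smul_smul]
    have hkey2 : lam * ((a : ℂ) * φ) - lam * ((b : ℂ) * φ) = lam ^ 2 - (a : ℂ) * (b : ℝ) := by
      linear_combination key
    match_scalars
    · linear_combination key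
    · ring
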